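/- arXiv:2102.04707 — 4 statements merged into one kernel-verified Lean document; each statement's English description precedes it below -/
import Mathlib

section
/- For every incidence graph G and integer k, if the strong recursive backdoor depth of G to 𝒞₀ is at most k, then every connected component of G has diameter at most 4·2^k − 4. -/
/-- Variables are natural numbers. -/
abbrev Var := ℕ

/-- A CNF formula: a finite set of clause identifiers, each identifier `i`
carrying the set of variables occurring positively (`pos i`) and negatively (`neg i`). -/
structure CNF where
  ids : Finset ℕ
  pos : ℕ → Finset Var
  neg : ℕ → Finset Var

namespace CNF

/-- The variables of clause `i`. -/
def cvars (φ : CNF) (i : ℕ) : Finset Var := φ.pos i ∪ φ.neg i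

/-- The variables of the formula. -/
def vars (φ : CNF) : Finset Var := φ.ids.biUnion φ.cvars

/-- The length of the formula: the sum of clause widths. -/
def len (φ : CNF) : ℕ := ∑ i ∈ φ.ids, (φ.cvars i).card

/-- `φ ∈ 𝒞_d`: every clause has at most `d` variables. -/
def InC (φ : CNF) (d : ℕ) : Prop := ∀ i ∈ φ.ids, (φ.cvars i).card ≤ d

/-- Assigning variable `x` to Boolean value `b`: clauses satisfied by the
assignment are removed, and `x` is removed from the remaining clauses. -/
def assign (φ : CNF) (x : Var) (b : Bool) : CNF where
  ids := φ.ids.filter fun i => x ∉ (if b then φ.pos i else φ.neg i)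
  pos := fun i => (φ.pos i).erase x
  neg := fun i => (φ.neg i).erase x

/-- Assigning all variables of a set `D` according to `τ`. -/
def assignSet (φ : CNF) (D : Finset Var) (τ : Var → Bool) : CNF where
  ids := φ.ids.filter fun i => ¬ ∃ x ∈ D, if τ x then x ∈ φ.pos i else x ∈ φ.neg i
  pos := fun i => φ.pos i \ D
  neg := fun i => φ.neg i \ D

/-- `τ` satisfies every clause of `φ`. -/
def satBy (φ : CNF) (τ : Var → Bool) : Prop :=
  ∀ i ∈ φ.ids, (∃ x ∈ φ.pos i, τ x = true) ∨ (∃ x ∈ φ.neg i, τ x = false)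

/-- `φ` is satisfiable. -/
def sat (φ : CNF) : Prop := ∃ τ, φ.satBy τ

/-- The number of satisfying assignments of `φ` over its variables
(assignments are normalized to be `false` outside `vars φ`). -/
noncomputable def count (φ : CNF) : ℕ :=
  Nat.card {τ : Var → Bool // φ.satBy τ ∧ ∀ x ∉ φ.vars, τ x = false}

/-- The incidence graph of `φ`: variable vertices `Sum.inl x` and clause
vertices `Sum.inr i`, adjacent iff `x` occurs in clause `i` of `φ`. -/
def incGraph (φ : CNF) : SimpleGraph (Var ⊕ ℕ) where
  Adj u v := match u, v with
    | Sum.inl x, Sum.inr i => i ∈ φ.ids ∧ x ∈ φ.cvars i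
    | Sum.inr i, Sum.inl x => i ∈ φ.ids ∧ x ∈ φ.cvars i
    | _, _ => False
  symm := ⟨by rintro (x | i) (y | j) h <;> exact h⟩
  loopless := ⟨by rintro (x | i) h <;> exact h⟩

/-- The vertices of the incidence graph that belong to `φ`. -/
def vertexSet (φ : CNF) : Set (Var ⊕ ℕ) :=
  {v | match v with | Sum.inl x => x ∈ φ.vars | Sum.inr i => i ∈ φ.ids}

/-- The incidence graph of `φ` is connected. -/
def Conn (φ : CNF) : Prop :=
  ∀ u ∈ φ.vertexSet, ∀ v ∈ φ.vertexSet, (incGraph φ).Reachable u v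

/-- The connected component (as a subformula) of clause `i` of `φ`. -/
noncomputable def componentOf (φ : CNF) (i : ℕ) : CNF := by
  classical
  exact { ids := φ.ids.filter fun j => (incGraph φ).Reachable (Sum.inr i) (Sum.inr j),
          pos := φ.pos, neg := φ.neg }

/-- The connected components of `φ`, as subformulas. -/
noncomputable def components (φ : CNF) : Finset CNF := by
  classical
  exact φ.ids.image φ.componentOf

/-- `ψ` is a connected component of `φ`. -/
def IsComponent (φ ψ : CNF) : Prop := ψ ∈ φ.components

end CNF

/-- `SrbdLE φ k`: the strong recursive backdoor depth of `φ` to `𝒞₀` is at most `k`.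
Either `φ` is edgeless, or we may assign one variable both ways at cost one,
or we may split into connected components for free. -/
inductive SrbdLE : CNF → ℕ → Prop where
| base (φ : CNF) (k : ℕ) : φ.vars = ∅ → SrbdLE φ k
| assign (φ : CNF) (k : ℕ) (x : Var) : x ∈ φ.vars →
    SrbdLE (φ.assign x true) k → SrbdLE (φ.assign x false) k → SrbdLE φ (k+1)
| split (φ : CNF) (k : ℕ) : (∀ ψ ∈ φ.components, SrbdLE ψ k) → SrbdLE φ k

/-- `WrbdLE φ k`: the weak recursive backdoor depth of `φ` to `𝒞₀` is at most `k`. -/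
inductive WrbdLE : CNF → ℕ → Prop where
| base (φ : CNF) (k : ℕ) : φ.vars = ∅ → φ.sat → WrbdLE φ k
| assign (φ : CNF) (k : ℕ) (x : Var) (b : Bool) : x ∈ φ.vars →
    WrbdLE (φ.assign x b) k → WrbdLE φ (k+1)
| split (φ : CNF) (k : ℕ) : (∀ ψ ∈ φ.components, WrbdLE ψ k) → WrbdLE φ k

/-- A strong recursive backdoor tree of `φ` to the class `C`:
leaves are formulas in `C`; a variable node branches on both assignments of a
variable of `φ`; a component node has one child per connected component. -/
inductive SRB (C : Set CNF) : CNF → Type where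
| leaf : (φ : CNF) → φ ∈ C → SRB C φ
| varNode : (φ : CNF) → (x : Var) → x ∈ φ.vars →
    SRB C (φ.assign x true) → SRB C (φ.assign x false) → SRB C φ
| compNode : (φ : CNF) → ((ψ : CNF) → ψ ∈ φ.components → SRB C ψ) → SRB C φ

namespace SRB

variable {C : Set CNF}

/-- The depth of a strong recursive backdoor: the maximal number of variable
nodes on a root-to-leaf path. -/
noncomputable def depth : {φ : CNF} → SRB C φ → ℕ
| _, .leaf _ _ => 0
| _, .varNode _ _ _ l r => 1 + max (depth l) (depth r)
| _, .compNode φ f => φ.components.attach.sup fun ψ => depth (f ψ.1 ψ.2)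

/-- The number of leaf nodes of a strong recursive backdoor. -/
noncomputable def leaves : {φ : CNF} → SRB C φ → ℕ
| _, .leaf _ _ => 1
| _, .varNode _ _ _ l r => leaves l + leaves r
| _, .compNode φ f => ∑ ψ ∈ φ.components.attach, leaves (f ψ.1 ψ.2)

/-- Bottom-up satisfiability evaluation of a strong recursive backdoor:
a leaf evaluates to the satisfiability of its formula, a variable node to the
disjunction of its children, a component node to the conjunction of its children. -/
def eval : {φ : CNF} → SRB C φ → Prop
| _, .leaf φ _ => φ.sat
| _, .varNode _ _ _ l r => eval l ∨ eval r
| _, .compNode φ f => ∀ (ψ : CNF) (h : ψ ∈ φ.components), eval (f ψ h)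

/-- Bottom-up model counting: a leaf contributes its model count, a variable
node the sum over both polarities (corrected by factors `2^e` for variables
disappearing from all clauses), a component node the product over components. -/
noncomputable def countEval : {φ : CNF} → SRB C φ → ℕ
| _, .leaf φ _ => φ.count
| _, .varNode φ x _ l r =>
    2 ^ (((φ.vars.erase x) \ (φ.assign x true).vars).card) * countEval l
  + 2 ^ (((φ.vars.erase x) \ (φ.assign x false).vars).card) * countEval r
| _, .compNode φ f => ∏ ψ ∈ φ.components.attach, countEval (f ψ.1 ψ.2)

end SRB

/-- The underlying data of an obstruction-tree: a base clause, or two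
obstruction-trees joined by a path (a list of incidence-graph vertices). -/
inductive ObsTree : Type where
| base : ℕ → ObsTree
| node : ObsTree → ObsTree → List (Var ⊕ ℕ) → ObsTree

namespace ObsTree

/-- The elements `V(T)` of an obstruction-tree, relative to formula `φ`. -/
def elts (φ : CNF) : ObsTree → Finset (Var ⊕ ℕ)
| .base i => insert (Sum.inr i) ((φ.cvars i).image Sum.inl)
| .node T₁ T₂ P => elts φ T₁ ∪ elts φ T₂ ∪ P.toFinset

/-- The variables `var(T)` among the elements of `T`. -/
def varSet (φ : CNF) (T : ObsTree) : Finset Var :=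
  (T.elts φ).biUnion fun v => match v with | Sum.inl x => {x} | Sum.inr _ => ∅

/-- The clauses `cla(T)` among the elements of `T`. -/
def claSet (φ : CNF) (T : ObsTree) : Finset ℕ :=
  (T.elts φ).biUnion fun v => match v with | Sum.inl _ => ∅ | Sum.inr i => {i}

/-- The destroy-neighborhood `N†_φ(T)`. -/
def nd (φ : CNF) : ObsTree → Finset Var
| .base i => φ.cvars i
| .node T₁ T₂ P =>
    (ObsTree.node T₁ T₂ P).varSet φ ∪
    (((ObsTree.node T₁ T₂ P).claSet φ).biUnion φ.pos ∩
      ((ObsTree.node T₁ T₂ P).claSet φ).biUnion φ.neg)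

end ObsTree

/-- `IsObsTree φ d k i T`: `T` is an `(i,d,k)`-obstruction-tree of `φ`.
A clause of width exactly `d` (with its variables) is a `(d,d,k)`-obstruction-tree;
two `(i,d,k)`-obstruction-trees with disjoint destroy-neighborhoods joined by a
path of length at most `λ_k = 4·2^k` form an `(i+1,d,k)`-obstruction-tree. -/
inductive IsObsTree (φ : CNF) (d k : ℕ) : ℕ → ObsTree → Prop where
| base (i : ℕ) : i ∈ φ.ids → (φ.cvars i).card = d → IsObsTree φ d k d (.base i)
| node (i : ℕ) (T₁ T₂ : ObsTree) (P : List (Var ⊕ ℕ)) :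
    IsObsTree φ d k i T₁ → IsObsTree φ d k i T₂ →
    Disjoint (T₁.nd φ) (T₂.nd φ) →
    P.Chain' (CNF.incGraph φ).Adj → P.Nodup →
    (hne : P ≠ []) →
    P.head hne ∈ T₁.elts φ → P.getLast hne ∈ T₂.elts φ →
    P.length ≤ 4 * 2 ^ k + 1 →
    IsObsTree φ d k (i+1) (.node T₁ T₂ P)

open SimpleGraph

lemma adj_elim {φ : CNF} {a b : Var ⊕ ℕ} (h : (CNF.incGraph φ).Adj a b) :
    (∃ x j, a = Sum.inl x ∧ b = Sum.inr j ∧ j ∈ φ.ids ∧ x ∈ φ.cvars j) ∨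
    (∃ j x, a = Sum.inr j ∧ b = Sum.inl x ∧ j ∈ φ.ids ∧ x ∈ φ.cvars j) :=
  match a, b, h with
  | Sum.inl x, Sum.inr j, h => Or.inl ⟨x, j, rfl, rfl, h.1, h.2⟩
  | Sum.inr j, Sum.inl x, h => Or.inr ⟨j, x, rfl, rfl, h.1, h.2⟩
  | Sum.inl _, Sum.inl _, h => h.elim
  | Sum.inr _, Sum.inr _, h => h.elim

lemma mem_vertexSet_of_adj {φ : CNF} {a b : Var ⊕ ℕ} (h : (CNF.incGraph φ).Adj a b) :
    a ∈ φ.vertexSet := by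
  rcases adj_elim h with ⟨x, j, rfl, rfl, hj, hx⟩ | ⟨j, x, rfl, rfl, hj, hx⟩
  · exact Finset.mem_biUnion.2 ⟨j, hj, hx⟩
  · exact hj

lemma end_mem_vertexSet {φ : CNF} : ∀ {u v : Var ⊕ ℕ} (W : (CNF.incGraph φ).Walk u v),
    W.length ≠ 0 → v ∈ φ.vertexSet := by
  intro u v W
  induction W with
  | nil => intro h; simp at h
  | cons hadj p ih =>
    intro _
    cases p with
    | nil => exact mem_vertexSet_of_adj hadj.symm
    | cons h' p' => exact ih (by simp)

lemma start_mem_vertexSet {φ : CNF} {u v : Var ⊕ ℕ} (W : (CNF.incGraph φ).Walk u v)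
    (h : W.length ≠ 0) : u ∈ φ.vertexSet :=
  end_mem_vertexSet W.reverse (by simpa using h)

lemma componentOf_ids_subset (φ : CNF) (i : ℕ) : (φ.componentOf i).ids ⊆ φ.ids := by
  classical
  unfold CNF.componentOf
  exact Finset.filter_subset _ _

lemma assign_le (φ : CNF) (x : Var) (b : Bool) :
    CNF.incGraph (φ.assign x b) ≤ CNF.incGraph φ := by
  intro a c h
  have key : ∀ j y, j ∈ (φ.assign x b).ids → y ∈ (φ.assign x b).cvars j →
      j ∈ φ.ids ∧ y ∈ φ.cvars j := by
    intro j y hj hy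
    refine ⟨Finset.mem_of_mem_filter _ hj, ?_⟩
    rcases Finset.mem_union.1 hy with h' | h'
    · exact Finset.mem_union.2 (Or.inl (Finset.mem_of_mem_erase h'))
    · exact Finset.mem_union.2 (Or.inr (Finset.mem_of_mem_erase h'))
  rcases adj_elim h with ⟨y, j, rfl, rfl, hj, hy⟩ | ⟨j, y, rfl, rfl, hj, hy⟩
  · exact key j y hj hy
  · exact key j y hj hy

lemma component_le (φ : CNF) (i : ℕ) :
    CNF.incGraph (φ.componentOf i) ≤ CNF.incGraph φ := by
  intro a c h
  have key : ∀ j y, j ∈ (φ.componentOf i).ids → y ∈ (φ.componentOf i).cvars j →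
      j ∈ φ.ids ∧ y ∈ φ.cvars j := by
    intro j y hj hy
    exact ⟨componentOf_ids_subset φ i hj, hy⟩
  rcases adj_elim h with ⟨y, j, rfl, rfl, hj, hy⟩ | ⟨j, y, rfl, rfl, hj, hy⟩
  · exact key j y hj hy
  · exact key j y hj hy

lemma walk_assign {φ : CNF} {x : Var} {b : Bool} :
    ∀ {u v : Var ⊕ ℕ} (W : (CNF.incGraph φ).Walk u v),
      (∀ j, Sum.inr j ∈ W.support → j ∈ φ.ids → x ∉ φ.cvars j) →
      Sum.inl x ∉ W.support →
      ∃ W' : (CNF.incGraph (φ.assign x b)).Walk u v, W'.length = W.length := by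
  intro u v W
  induction W with
  | nil => exact fun _ _ => ⟨Walk.nil, rfl⟩
  | @cons u m v hadj p ih =>
    intro hcl hxs
    rw [Walk.support_cons] at hcl hxs
    have hcl' : ∀ j, Sum.inr j ∈ p.support → j ∈ φ.ids → x ∉ φ.cvars j :=
      fun j hj => hcl j (List.mem_cons_of_mem _ hj)
    have hxs' : Sum.inl x ∉ p.support := fun h => hxs (List.mem_cons_of_mem _ h)
    obtain ⟨p', hp'⟩ := ih hcl' hxs'
    have key : ∀ y j, j ∈ φ.ids → y ∈ φ.cvars j → x ∉ φ.cvars j → y ≠ x →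
        j ∈ (φ.assign x b).ids ∧ y ∈ (φ.assign x b).cvars j := by
      intro y j hj hy hxj hyx
      have hxp : x ∉ φ.pos j := fun h => hxj (Finset.mem_union.2 (Or.inl h))
      have hxn : x ∉ φ.neg j := fun h => hxj (Finset.mem_union.2 (Or.inr h))
      refine ⟨Finset.mem_filter.2 ⟨hj, by cases b <;> simp [hxp, hxn]⟩, ?_⟩
      rcases Finset.mem_union.1 hy with h' | h'
      · exact Finset.mem_union.2 (Or.inl (Finset.mem_erase.2 ⟨hyx, h'⟩))
      · exact Finset.mem_union.2 (Or.inr (Finset.mem_erase.2 ⟨hyx, h'⟩))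
    rcases adj_elim hadj with ⟨y, j, hu, hm, hj, hy⟩ | ⟨j, y, hu, hm, hj, hy⟩
    · subst hu; subst hm
      have hxj : x ∉ φ.cvars j :=
        hcl j (List.mem_cons_of_mem _ p.start_mem_support) hj
      have hyx : y ≠ x := fun e => hxs (by rw [← e]; exact List.mem_cons_self)
      have hadj' : (CNF.incGraph (φ.assign x b)).Adj (Sum.inl y) (Sum.inr j) :=
        key y j hj hy hxj hyx
      exact ⟨Walk.cons hadj' p', by simp [hp']⟩
    · subst hu; subst hm
      have hxj : x ∉ φ.cvars j := hcl j List.mem_cons_self hj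
      have hyx : y ≠ x := fun e => hxs
        (List.mem_cons_of_mem _ (by rw [← e]; exact p.start_mem_support))
      have hadj' : (CNF.incGraph (φ.assign x b)).Adj (Sum.inr j) (Sum.inl y) :=
        key y j hj hy hxj hyx
      exact ⟨Walk.cons hadj' p', by simp [hp']⟩

lemma walk_component {φ : CNF} {i : ℕ} :
    ∀ {u v : Var ⊕ ℕ} (W : (CNF.incGraph φ).Walk u v),
      (CNF.incGraph φ).Reachable (Sum.inr i) u →
      ∃ W' : (CNF.incGraph (φ.componentOf i)).Walk u v, W'.length = W.length := by
  intro u v W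
  induction W with
  | nil => exact fun _ => ⟨Walk.nil, rfl⟩
  | @cons u m v hadj p ih =>
    intro hu
    obtain ⟨p', hp'⟩ := ih (hu.trans hadj.reachable)
    have key : ∀ j y, j ∈ φ.ids → y ∈ φ.cvars j →
        (CNF.incGraph φ).Reachable (Sum.inr i) (Sum.inr j) →
        j ∈ (φ.componentOf i).ids ∧ y ∈ (φ.componentOf i).cvars j := by
      intro j y hj hy hr
      constructor
      · classical
        unfold CNF.componentOf
        exact Finset.mem_filter.2 ⟨hj, hr⟩
      · exact hy
    rcases adj_elim hadj with ⟨y, j, hu', hm, hj, hy⟩ | ⟨j, y, hu', hm, hj, hy⟩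
    · subst hu'; subst hm
      have hadj' : (CNF.incGraph (φ.componentOf i)).Adj (Sum.inl y) (Sum.inr j) :=
        key j y hj hy (hu.trans hadj.reachable)
      exact ⟨Walk.cons hadj' p', by simp [hp']⟩
    · subst hu'; subst hm
      have hadj' : (CNF.incGraph (φ.componentOf i)).Adj (Sum.inr j) (Sum.inl y) :=
        key j y hj hy hu
      exact ⟨Walk.cons hadj' p', by simp [hp']⟩

lemma key_dist (φ : CNF) (x : Var) (D : ℕ)
    (IH : ∀ a ∈ (φ.assign x true).vertexSet, ∀ c ∈ (φ.assign x true).vertexSet,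
      (CNF.incGraph (φ.assign x true)).Reachable a c →
      (CNF.incGraph (φ.assign x true)).dist a c ≤ D) :
    ∀ n (u : Var ⊕ ℕ) (p : (CNF.incGraph φ).Walk (Sum.inl x) u), p.length ≤ n →
      (CNF.incGraph φ).dist (Sum.inl x) u ≤ D + 2 := by
  intro n
  induction n with
  | zero =>
    intro u p hp
    have : Sum.inl x = u := p.eq_of_length_eq_zero (Nat.le_zero.1 hp)
    subst this
    have h0 : (CNF.incGraph φ).dist (Sum.inl x) (Sum.inl x) = 0 := SimpleGraph.dist_self
    omega
  | succ n ihn =>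
    intro u p hp
    rcases le_or_gt p.bypass.length 2 with h2 | h2
    · calc (CNF.incGraph φ).dist (Sum.inl x) u ≤ p.bypass.length := dist_le p.bypass
        _ ≤ D + 2 := by omega
    · have hPpath : p.bypass.IsPath := p.bypass_isPath
      have hPlen : p.bypass.length ≤ n + 1 := le_trans p.length_bypass_le hp
      obtain ⟨P, hQpath, hQlen, hQ2⟩ :
          ∃ P : (CNF.incGraph φ).Walk (Sum.inl x) u,
            P.IsPath ∧ P.length ≤ n + 1 ∧ 2 < P.length := ⟨p.bypass, hPpath, hPlen, h2⟩
      clear h2 hPlen hPpath hp p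
      cases P with
      | nil => simp at hQ2
      | @cons _ m _ h₁ P₁ =>
        cases m with
        | inl z => exact absurd h₁ (by rintro ⟨⟩)
        | inr j₀ =>
        cases P₁ with
        | nil => simp at hQ2
        | @cons _ w _ h₂ q =>
          cases w with
          | inr j₁ => exact absurd h₂ (by rintro ⟨⟩)
          | inl y =>
          rw [Walk.cons_isPath_iff] at hQpath
          obtain ⟨hQpath, hxnot⟩ := hQpath
          rw [Walk.cons_isPath_iff] at hQpath
          obtain ⟨hqpath, hj₀not⟩ := hQpath
          rw [Walk.support_cons] at hxnot
          have hxq : Sum.inl x ∉ q.support := fun h => hxnot (List.mem_cons_of_mem _ h)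
          have hyx : y ≠ x := by
            intro e
            exact hxq (by rw [← e]; exact q.start_mem_support)
          simp only [Walk.length_cons] at hQlen hQ2
          rcases Classical.em (∃ j, Sum.inr j ∈ q.support ∧ j ∈ φ.ids ∧ x ∈ φ.cvars j)
            with hex | hex
          · obtain ⟨j, hjs, hjid, hjx⟩ := hex
            have hadj : (CNF.incGraph φ).Adj (Sum.inl x) (Sum.inr j) := ⟨hjid, hjx⟩
            have hdrop : (q.dropUntil _ hjs).length ≤ q.length := q.length_dropUntil_le hjs
            exact ihn u (Walk.cons hadj (q.dropUntil _ hjs)) (by simp; omega)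
          · push_neg at hex
            obtain ⟨q', hq'⟩ := walk_assign (b := true) q hex hxq
            have hq'0 : q'.length ≠ 0 := by omega
            have hmem1 : Sum.inl y ∈ (φ.assign x true).vertexSet :=
              start_mem_vertexSet q' hq'0
            have hmem2 : u ∈ (φ.assign x true).vertexSet := end_mem_vertexSet q' hq'0
            have hd' : (CNF.incGraph (φ.assign x true)).dist (Sum.inl y) u ≤ D :=
              IH _ hmem1 _ hmem2 ⟨q'⟩
            have hdG : (CNF.incGraph φ).dist (Sum.inl y) u ≤ D :=
              le_trans (Reachable.dist_anti (assign_le φ x true) ⟨q'⟩) hd'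
            obtain ⟨W, hW⟩ :=
              (show (CNF.incGraph φ).Reachable (Sum.inl y) u from ⟨q⟩).exists_walk_length_eq_dist
            have := SimpleGraph.dist_le (Walk.cons h₁ (Walk.cons h₂ W))
            simp only [Walk.length_cons] at this
            omega

/-- if the strong recursive backdoor depth of `φ` to `𝒞₀` is at
most `k`, then every connected component of the incidence graph has diameter
at most `4·2^k − 4`. -/
theorem srbd_low_diameter (φ : CNF) (k : ℕ) (h : SrbdLE φ k) :
    ∀ u ∈ φ.vertexSet, ∀ v ∈ φ.vertexSet,
      (CNF.incGraph φ).Reachable u v →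
      (CNF.incGraph φ).dist u v ≤ 4 * 2 ^ k - 4 := by
  induction h with
  | base φ k hvars =>
    intro u hu v hv hr
    obtain ⟨W⟩ := hr
    have huv : u = v := by
      cases W with
      | nil => rfl
      | cons hadj p =>
        exfalso
        rcases adj_elim hadj with ⟨y, j, _, _, hj, hy⟩ | ⟨j, y, _, _, hj, hy⟩ <;>
        · have hmem : y ∈ φ.vars := Finset.mem_biUnion.2 ⟨j, hj, hy⟩
          rw [hvars] at hmem
          exact Finset.notMem_empty _ hmem
    subst huv
    rw [SimpleGraph.dist_self]
    exact Nat.zero_le _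
  | assign φ k x hx h1 h2 IH1 IH2 =>
    intro u hu v hv hr
    rcases Classical.em (u = v) with huv | huv
    · subst huv; rw [SimpleGraph.dist_self]; exact Nat.zero_le _
    have hpow : (1:ℕ) ≤ 2 ^ k := Nat.one_le_two_pow
    rw [pow_succ]
    rcases Classical.em ((CNF.incGraph φ).Reachable u (Sum.inl x)) with hux | hux
    · have hvx : (CNF.incGraph φ).Reachable v (Sum.inl x) := hr.symm.trans hux
      have hdu : (CNF.incGraph φ).dist (Sum.inl x) u ≤ (4 * 2 ^ k - 4) + 2 := by
        obtain ⟨p⟩ := hux.symm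
        exact key_dist φ x _ IH1 p.length u p le_rfl
      have hdv : (CNF.incGraph φ).dist (Sum.inl x) v ≤ (4 * 2 ^ k - 4) + 2 := by
        obtain ⟨p⟩ := hvx.symm
        exact key_dist φ x _ IH1 p.length v p le_rfl
      obtain ⟨W1, hW1⟩ := hux.symm.exists_walk_length_eq_dist
      obtain ⟨W2, hW2⟩ := hvx.symm.exists_walk_length_eq_dist
      have hfin := SimpleGraph.dist_le (W1.reverse.append W2)
      rw [Walk.length_append, Walk.length_reverse] at hfin
      omega
    · obtain ⟨W⟩ := hr
      have hcl : ∀ j, Sum.inr j ∈ W.support → j ∈ φ.ids → x ∉ φ.cvars j := by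
        intro j hj hjid hjx
        have hadj : (CNF.incGraph φ).Adj (Sum.inr j) (Sum.inl x) := ⟨hjid, hjx⟩
        exact hux ((Reachable.trans ⟨W.takeUntil _ hj⟩) hadj.reachable)
      have hxs : Sum.inl x ∉ W.support := fun hmem => hux ⟨W.takeUntil _ hmem⟩
      obtain ⟨W', hW'⟩ := walk_assign (b := true) W hcl hxs
      have hlen0 : W'.length ≠ 0 := by
        intro h0
        exact huv (W.eq_of_length_eq_zero (by omega))
      have hd := IH1 _ (start_mem_vertexSet W' hlen0) _ (end_mem_vertexSet W' hlen0) ⟨W'⟩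
      have hd2 := le_trans (Reachable.dist_anti (assign_le φ x true) ⟨W'⟩) hd
      omega
  | split φ k hcomp IH =>
    intro u hu v hv hr
    rcases Classical.em (u = v) with huv | huv
    · subst huv; rw [SimpleGraph.dist_self]; exact Nat.zero_le _
    obtain ⟨i, hi, hui⟩ : ∃ i, i ∈ φ.ids ∧ (CNF.incGraph φ).Reachable (Sum.inr i) u := by
      cases u with
      | inr i => exact ⟨i, hu, Reachable.refl _⟩
      | inl y =>
        obtain ⟨i, hi, hyi⟩ := Finset.mem_biUnion.1 hu
        have hadj : (CNF.incGraph φ).Adj (Sum.inl y) (Sum.inr i) := ⟨hi, hyi⟩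
        exact ⟨i, hi, hadj.reachable.symm⟩
    have hψ : φ.componentOf i ∈ φ.components := by
      classical
      unfold CNF.components
      exact Finset.mem_image_of_mem _ hi
    obtain ⟨W⟩ := hr
    obtain ⟨W', hW'⟩ := walk_component W hui
    have hlen0 : W'.length ≠ 0 := by
      intro h0
      exact huv (W.eq_of_length_eq_zero (by omega))
    have hd := IH _ hψ _ (start_mem_vertexSet W' hlen0) _ (end_mem_vertexSet W' hlen0) ⟨W'⟩
    exact le_trans (Reachable.dist_anti (component_le φ i) ⟨W'⟩) hd
end

section
/- For every incidence graph G and integer k, if the weak recursive backdoor depth of G to 𝒞₀ is at most k, then every connected component of G has diameter at most 4·2^k − 4. -/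
open SimpleGraph

namespace CNF

lemma mem_vars_iff {φ : CNF} {x : Var} : x ∈ φ.vars ↔ ∃ i ∈ φ.ids, x ∈ φ.cvars i :=
  Finset.mem_biUnion

lemma assign_cvars (φ : CNF) (x : Var) (b : Bool) (j : ℕ) :
    (φ.assign x b).cvars j = (φ.cvars j).erase x := by
  simp [assign, cvars, Finset.erase_union_distrib]

lemma mem_assign_ids {φ : CNF} {x : Var} {b : Bool} {j : ℕ} (hj : j ∈ φ.ids)
    (hx : x ∉ φ.cvars j) : j ∈ (φ.assign x b).ids := by
  simp only [assign, Finset.mem_filter]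
  refine ⟨hj, ?_⟩
  simp only [cvars, Finset.mem_union, not_or] at hx
  cases b <;> simp [hx.1, hx.2]

lemma mem_vars_assign {φ : CNF} {x y : Var} {b : Bool} {j : ℕ} (hj : j ∈ φ.ids)
    (hx : x ∉ φ.cvars j) (hy : y ∈ φ.cvars j) : y ∈ (φ.assign x b).vars := by
  refine mem_vars_iff.2 ⟨j, mem_assign_ids hj hx, ?_⟩
  rw [assign_cvars]
  exact Finset.mem_erase.2 ⟨fun h => hx (h ▸ hy), hy⟩

lemma assign_le (φ : CNF) (x : Var) (b : Bool) :
    incGraph (φ.assign x b) ≤ incGraph φ := by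
  rintro (y | i) (z | j) h
  · exact h.elim
  · obtain ⟨h1, h2⟩ := h
    exact ⟨(Finset.mem_filter.1 h1).1, Finset.erase_subset _ _ ((assign_cvars φ x b j) ▸ h2)⟩
  · obtain ⟨h1, h2⟩ := h
    exact ⟨(Finset.mem_filter.1 h1).1, Finset.erase_subset _ _ ((assign_cvars φ x b i) ▸ h2)⟩
  · exact h.elim

lemma mem_componentOf_ids {φ : CNF} {i j : ℕ} :
    j ∈ (φ.componentOf i).ids ↔ j ∈ φ.ids ∧ (incGraph φ).Reachable (Sum.inr i) (Sum.inr j) := by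
  simp [componentOf, Finset.mem_filter]

lemma componentOf_cvars (φ : CNF) (i j : ℕ) : (φ.componentOf i).cvars j = φ.cvars j := rfl

lemma componentOf_le (φ : CNF) (i : ℕ) : incGraph (φ.componentOf i) ≤ incGraph φ := by
  rintro (y | a) (z | j) h
  · exact h.elim
  · exact ⟨(mem_componentOf_ids.1 h.1).1, h.2⟩
  · exact ⟨(mem_componentOf_ids.1 h.1).1, h.2⟩
  · exact h.elim

end CNF

lemma reach_dist_triangle {V : Type*} {G : SimpleGraph V} {u v w : V}
    (h1 : G.Reachable u v) (h2 : G.Reachable v w) :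
    G.dist u w ≤ G.dist u v + G.dist v w := by
  obtain ⟨p, hp⟩ := h1.exists_walk_length_eq_dist
  obtain ⟨q, hq⟩ := h2.exists_walk_length_eq_dist
  rw [← hp, ← hq, ← SimpleGraph.Walk.length_append]
  exact SimpleGraph.dist_le _

lemma transfer_assign (φ : CNF) (x : Var) (b : Bool) :
    ∀ {u v : Var ⊕ ℕ} (w : (CNF.incGraph φ).Walk u v),
    (∀ j, Sum.inr j ∈ w.support → j ∈ φ.ids → x ∉ φ.cvars j) →
    (CNF.incGraph (φ.assign x b)).Reachable u v := by
  intro u v w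
  induction w with
  | nil => exact fun _ => Reachable.refl _
  | @cons a c d h p ih =>
    intro H
    have H' : ∀ j, Sum.inr j ∈ p.support → j ∈ φ.ids → x ∉ φ.cvars j := by
      intro j hj
      exact H j (by rw [SimpleGraph.Walk.support_cons]; exact List.mem_cons_of_mem _ hj)
    refine Reachable.trans ?_ (ih H')
    match a, c, h with
    | Sum.inl y, Sum.inr j, ⟨hj, hy⟩ =>
      have hx : x ∉ φ.cvars j := H j (by
        exact List.mem_cons_of_mem _ p.start_mem_support) hj
      exact SimpleGraph.Adj.reachable ⟨CNF.mem_assign_ids hj hx, by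
        rw [CNF.assign_cvars]; exact Finset.mem_erase.2 ⟨fun h => hx (h ▸ hy), hy⟩⟩
    | Sum.inr j, Sum.inl y, ⟨hj, hy⟩ =>
      have hx : x ∉ φ.cvars j := H j (by
        exact SimpleGraph.Walk.start_mem_support _) hj
      exact SimpleGraph.Adj.reachable ⟨CNF.mem_assign_ids hj hx, by
        rw [CNF.assign_cvars]; exact Finset.mem_erase.2 ⟨fun h => hx (h ▸ hy), hy⟩⟩

lemma transfer_comp (φ : CNF) (i : ℕ) :
    ∀ {u v : Var ⊕ ℕ} (w : (CNF.incGraph φ).Walk u v),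
    (CNF.incGraph φ).Reachable (Sum.inr i) u →
    (CNF.incGraph (φ.componentOf i)).Reachable u v := by
  intro u v w
  induction w with
  | nil => exact fun _ => Reachable.refl _
  | @cons a c d h p ih =>
    intro H
    have Hc : (CNF.incGraph φ).Reachable (Sum.inr i) c := H.trans h.reachable
    refine Reachable.trans ?_ (ih Hc)
    match a, c, h with
    | Sum.inl y, Sum.inr j, ⟨hj, hy⟩ =>
      exact SimpleGraph.Adj.reachable ⟨CNF.mem_componentOf_ids.2 ⟨hj, Hc⟩, hy⟩
    | Sum.inr j, Sum.inl y, ⟨hj, hy⟩ =>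
      exact SimpleGraph.Adj.reachable ⟨CNF.mem_componentOf_ids.2 ⟨hj, H⟩, hy⟩

lemma start_mem_assign_vertexSet (φ : CNF) (x : Var) (b : Bool) {a c : Var ⊕ ℕ}
    (r : (CNF.incGraph φ).Walk a c) (hne : 0 < r.length)
    (F : ∀ j, Sum.inr j ∈ r.support → j ∈ φ.ids → x ∉ φ.cvars j) :
    a ∈ (φ.assign x b).vertexSet := by
  cases r with
  | nil => simp at hne
  | @cons a c d h p =>
    match a, c, h with
    | Sum.inl y, Sum.inr j, ⟨hj, hy⟩ =>
      have hxj : x ∉ φ.cvars j := F j (by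
        exact List.mem_cons_of_mem _ p.start_mem_support) hj
      exact CNF.mem_vars_assign hj hxj hy
    | Sum.inr j, Sum.inl y, ⟨hj, hy⟩ =>
      have hxj : x ∉ φ.cvars j := F j (by
        exact SimpleGraph.Walk.start_mem_support _) hj
      exact CNF.mem_assign_ids hj hxj

lemma mem_assign_vertexSet_of_not_reach (φ : CNF) (x : Var) (b : Bool) {u : Var ⊕ ℕ}
    (hu : u ∈ φ.vertexSet)
    (hrx : ¬ (CNF.incGraph φ).Reachable u (Sum.inl x)) :
    u ∈ (φ.assign x b).vertexSet := by
  match u with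
  | Sum.inl y =>
    have hy : y ∈ φ.vars := hu
    obtain ⟨j, hj, hyc⟩ := CNF.mem_vars_iff.1 hy
    have hxj : x ∉ φ.cvars j := by
      intro hxj
      have a1 : (CNF.incGraph φ).Adj (Sum.inl y) (Sum.inr j) := ⟨hj, hyc⟩
      have a2 : (CNF.incGraph φ).Adj (Sum.inr j) (Sum.inl x) := ⟨hj, hxj⟩
      exact hrx (a1.reachable.trans a2.reachable)
    exact CNF.mem_vars_assign hj hxj hyc
  | Sum.inr j =>
    have hj : j ∈ φ.ids := hu
    have hxj : x ∉ φ.cvars j := fun hxj =>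
      hrx (SimpleGraph.Adj.reachable (show (CNF.incGraph φ).Adj (Sum.inr j) (Sum.inl x) from ⟨hj, hxj⟩))
    exact CNF.mem_assign_ids hj hxj

lemma dist_to_var_le (φ : CNF) (x : Var) (b : Bool) (D : ℕ)
    (IH : ∀ u ∈ (φ.assign x b).vertexSet, ∀ v ∈ (φ.assign x b).vertexSet,
      (CNF.incGraph (φ.assign x b)).Reachable u v →
      (CNF.incGraph (φ.assign x b)).dist u v ≤ D)
    {u : Var ⊕ ℕ} (hu : u ∈ φ.vertexSet)
    (hr : (CNF.incGraph φ).Reachable u (Sum.inl x)) :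
    (CNF.incGraph φ).dist u (Sum.inl x) ≤ D + 2 := by
  by_cases hm : (CNF.incGraph φ).dist u (Sum.inl x) ≤ 2
  · omega
  push_neg at hm
  obtain ⟨q, hq⟩ := (hr.symm).exists_walk_length_eq_dist
  rw [SimpleGraph.dist_comm (u := Sum.inl x)] at hq
  cases q with
  | nil => simp at hm
  | @cons _ w1 _ h₁ q₁ =>
    cases q₁ with
    | nil => simp at hq; omega
    | @cons _ w2 _ h₂ q₂ =>
      simp only [SimpleGraph.Walk.length_cons] at hq
      -- hq : q₂.length + 1 + 1 = dist u (inl x)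
      have F : ∀ j, Sum.inr j ∈ q₂.support → j ∈ φ.ids → x ∉ φ.cvars j := by
        intro j hjs hj hxj
        have hdju : (CNF.incGraph φ).dist u (Sum.inr j) ≤ q₂.length := by
          rw [SimpleGraph.dist_comm]
          exact le_trans (SimpleGraph.dist_le (q₂.dropUntil _ hjs))
            (SimpleGraph.Walk.length_dropUntil_le q₂ hjs)
        have hru : (CNF.incGraph φ).Reachable u (Sum.inr j) :=
          ((q₂.dropUntil _ hjs).reverse).reachable
        have adjx : (CNF.incGraph φ).Adj (Sum.inr j) (Sum.inl x) := ⟨hj, hxj⟩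
        have hdx : (CNF.incGraph φ).dist (Sum.inr j) (Sum.inl x) ≤ 1 := by
          simpa using SimpleGraph.dist_le (SimpleGraph.Walk.cons adjx SimpleGraph.Walk.nil)
        have := reach_dist_triangle hru adjx.reachable
        omega
      have Fr : ∀ j, Sum.inr j ∈ q₂.reverse.support → j ∈ φ.ids → x ∉ φ.cvars j := by
        intro j hjs
        exact F j (by rwa [SimpleGraph.Walk.support_reverse, List.mem_reverse] at hjs)
      have hL : 0 < q₂.length := by omega
      have hu' : u ∈ (φ.assign x b).vertexSet :=
        start_mem_assign_vertexSet φ x b q₂.reverse (by simpa using hL) Fr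
      have hw2' : w2 ∈ (φ.assign x b).vertexSet :=
        start_mem_assign_vertexSet φ x b q₂ hL F
      have hreach' : (CNF.incGraph (φ.assign x b)).Reachable u w2 :=
        transfer_assign φ x b q₂.reverse Fr
      have hd1 : (CNF.incGraph (φ.assign x b)).dist u w2 ≤ D := IH u hu' w2 hw2' hreach'
      have hd2 : (CNF.incGraph φ).dist u w2 ≤ (CNF.incGraph (φ.assign x b)).dist u w2 :=
        hreach'.dist_anti (CNF.assign_le φ x b)
      have hd3 : (CNF.incGraph φ).dist w2 (Sum.inl x) ≤ 2 := by
        simpa using SimpleGraph.dist_le (SimpleGraph.Walk.cons h₂.symm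
          (SimpleGraph.Walk.cons h₁.symm SimpleGraph.Walk.nil))
      have := reach_dist_triangle q₂.reverse.reachable
        ((SimpleGraph.Walk.cons h₂.symm (SimpleGraph.Walk.cons h₁.symm
          SimpleGraph.Walk.nil)).reachable)
      omega

/-- if the weak recursive backdoor depth of `φ` to `𝒞₀` is at
most `k`, then every connected component of the incidence graph has diameter
at most `4·2^k − 4`. -/
theorem wrbd_low_diameter (φ : CNF) (k : ℕ) (h : WrbdLE φ k) :
    ∀ u ∈ φ.vertexSet, ∀ v ∈ φ.vertexSet,
      (CNF.incGraph φ).Reachable u v →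
      (CNF.incGraph φ).dist u v ≤ 4 * 2 ^ k - 4 := by
  induction h with
  | base φ k hvars hsat =>
    intro u hu v hv hr
    have noadj : ∀ a c : Var ⊕ ℕ, ¬ (CNF.incGraph φ).Adj a c := by
      intro a c h
      match a, c, h with
      | Sum.inl y, Sum.inr j, ⟨hj, hy⟩ =>
        have : y ∈ φ.vars := CNF.mem_vars_iff.2 ⟨j, hj, hy⟩
        rw [hvars] at this; simp at this
      | Sum.inr j, Sum.inl y, ⟨hj, hy⟩ =>
        have : y ∈ φ.vars := CNF.mem_vars_iff.2 ⟨j, hj, hy⟩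
        rw [hvars] at this; simp at this
    have huv : u = v := by
      obtain ⟨w⟩ := hr
      cases w with
      | nil => rfl
      | cons h p => exact absurd h (noadj _ _)
    subst huv
    simp [SimpleGraph.dist_self]
  | @assign φ k x b hx h' IH =>
    intro u hu v hv hr
    have hN : 1 ≤ 2 ^ k := Nat.one_le_two_pow
    have hpow : (4 : ℕ) * 2 ^ (k + 1) = 8 * 2 ^ k := by rw [pow_succ]; ring
    by_cases hrx : (CNF.incGraph φ).Reachable u (Sum.inl x)
    · have hrvx : (CNF.incGraph φ).Reachable v (Sum.inl x) := hr.symm.trans hrx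
      have c1 := dist_to_var_le φ x b (4 * 2 ^ k - 4) IH hu hrx
      have c2 := dist_to_var_le φ x b (4 * 2 ^ k - 4) IH hv hrvx
      have tri : (CNF.incGraph φ).dist u v ≤
          (CNF.incGraph φ).dist u (Sum.inl x) + (CNF.incGraph φ).dist (Sum.inl x) v :=
        reach_dist_triangle hrx hrvx.symm
      rw [SimpleGraph.dist_comm (u := Sum.inl x)] at tri
      omega
    · have hrvx : ¬ (CNF.incGraph φ).Reachable v (Sum.inl x) := fun hc => hrx (hr.trans hc)
      obtain ⟨w⟩ := hr
      have F : ∀ j, Sum.inr j ∈ w.support → j ∈ φ.ids → x ∉ φ.cvars j := by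
        intro j hjs hj hxj
        have adjx : (CNF.incGraph φ).Adj (Sum.inr j) (Sum.inl x) := ⟨hj, hxj⟩
        exact hrx ((w.takeUntil _ hjs).reachable.trans adjx.reachable)
      have hr' := transfer_assign φ x b w F
      have hu' := mem_assign_vertexSet_of_not_reach φ x b hu hrx
      have hv' := mem_assign_vertexSet_of_not_reach φ x b hv hrvx
      have hd1 := IH u hu' v hv' hr'
      have hd2 := hr'.dist_anti (CNF.assign_le φ x b)
      omega
  | split φ k hcomp IH =>
    intro u hu v hv hr
    have hex : ∃ i ∈ φ.ids, (CNF.incGraph φ).Reachable (Sum.inr i) u := by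
      match u, hu with
      | Sum.inr i, hi => exact ⟨i, hi, SimpleGraph.Reachable.refl _⟩
      | Sum.inl y, hy =>
        obtain ⟨i, hi, hyc⟩ := CNF.mem_vars_iff.1 hy
        have a1 : (CNF.incGraph φ).Adj (Sum.inl y) (Sum.inr i) := ⟨hi, hyc⟩
        exact ⟨i, hi, a1.reachable.symm⟩
    obtain ⟨i, hi, hru⟩ := hex
    have hψ : φ.componentOf i ∈ φ.components := by
      classical
      unfold CNF.components
      exact Finset.mem_image_of_mem _ hi
    have hrv : (CNF.incGraph φ).Reachable (Sum.inr i) v := hru.trans hr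
    have hmem : ∀ a : Var ⊕ ℕ, a ∈ φ.vertexSet →
        (CNF.incGraph φ).Reachable (Sum.inr i) a → a ∈ (φ.componentOf i).vertexSet := by
      intro a ha hra
      match a, ha with
      | Sum.inr j, hj => exact CNF.mem_componentOf_ids.2 ⟨hj, hra⟩
      | Sum.inl y, hy =>
        obtain ⟨j, hj, hyc⟩ := CNF.mem_vars_iff.1 hy
        have a1 : (CNF.incGraph φ).Adj (Sum.inl y) (Sum.inr j) := ⟨hj, hyc⟩
        have : j ∈ (φ.componentOf i).ids :=
          CNF.mem_componentOf_ids.2 ⟨hj, hra.trans a1.reachable⟩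
        exact CNF.mem_vars_iff.2 ⟨j, this, hyc⟩
    have hu' := hmem u hu hru
    have hv' := hmem v hv hrv
    obtain ⟨w⟩ := hr
    have hr' := transfer_comp φ i w hru
    exact le_trans (hr'.dist_anti (CNF.componentOf_le φ i))
      (IH _ hψ u hu' v hv' hr')
end

section
/- Obstruction-trees are only influenced by adjacent variables: for all integers i,d,k, every incidence graph G in 𝒞_d, every (i,d,k)-obstruction-tree T of G, every variable x of G, and every polarity ⋆, if x ∉ var(T) and no clause of T is connected to x by an edge of polarity ⋆, then T is still an (i,d,k)-obstruction-tree of G[x_⋆]. -/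
section Aux

lemma cvars_assign (φ : CNF) (x : Var) (b : Bool) (i : ℕ) :
    (φ.assign x b).cvars i = (φ.cvars i).erase x := by
  ext y
  simp [CNF.cvars, CNF.assign, Finset.mem_erase, Finset.mem_union]
  tauto

lemma mem_ids_assign {φ : CNF} {x : Var} {b : Bool} {i : ℕ} :
    i ∈ (φ.assign x b).ids ↔ i ∈ φ.ids ∧ x ∉ (if b then φ.pos i else φ.neg i) := by
  simp [CNF.assign]

lemma elts_assign (φ : CNF) (x : Var) (b : Bool) :
    ∀ (T : ObsTree), Sum.inl x ∉ T.elts φ → T.elts (φ.assign x b) = T.elts φ := by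
  intro T
  induction T with
  | base i =>
      intro hvar
      have hx : x ∉ φ.cvars i := by
        intro hx
        exact hvar (by simp [ObsTree.elts, hx])
      simp [ObsTree.elts, cvars_assign, Finset.erase_eq_self.2 hx]
  | node T₁ T₂ P ih₁ ih₂ =>
      intro hvar
      simp only [ObsTree.elts, Finset.mem_union, not_or] at hvar ⊢
      rw [ih₁ hvar.1.1, ih₂ hvar.1.2]

lemma varSet_assign (φ : CNF) (x : Var) (b : Bool) (T : ObsTree)
    (hvar : Sum.inl x ∉ T.elts φ) : T.varSet (φ.assign x b) = T.varSet φ := by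
  unfold ObsTree.varSet
  rw [elts_assign φ x b T hvar]

lemma claSet_assign (φ : CNF) (x : Var) (b : Bool) (T : ObsTree)
    (hvar : Sum.inl x ∉ T.elts φ) : T.claSet (φ.assign x b) = T.claSet φ := by
  unfold ObsTree.claSet
  rw [elts_assign φ x b T hvar]

lemma mem_claSet_of_mem_elts {φ : CNF} {T : ObsTree} {i : ℕ}
    (h : Sum.inr i ∈ T.elts φ) : i ∈ T.claSet φ :=
  Finset.mem_biUnion.2 ⟨_, h, by simp⟩

lemma claSet_mono {φ : CNF} {T₁ T₂ : ObsTree} {P : List (Var ⊕ ℕ)} :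
    T₁.claSet φ ⊆ (ObsTree.node T₁ T₂ P).claSet φ ∧
    T₂.claSet φ ⊆ (ObsTree.node T₁ T₂ P).claSet φ := by
  constructor <;>
    exact Finset.biUnion_subset_biUnion_of_subset_left _
      (by simp only [ObsTree.elts]; intro a ha; simp [Finset.mem_union]; tauto)

lemma nd_assign_subset (φ : CNF) (x : Var) (b : Bool) :
    ∀ (T : ObsTree), Sum.inl x ∉ T.elts φ → T.nd (φ.assign x b) ⊆ T.nd φ := by
  intro T
  cases T with
  | base i =>
      intro _
      simp only [ObsTree.nd, cvars_assign]
      exact Finset.erase_subset _ _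
  | node T₁ T₂ P =>
      intro hvar
      simp only [ObsTree.nd]
      rw [varSet_assign φ x b _ hvar, claSet_assign φ x b _ hvar]
      apply Finset.union_subset_union subset_rfl
      apply Finset.inter_subset_inter <;>
        exact Finset.biUnion_mono fun j _ => by
          simp only [CNF.assign]; exact Finset.erase_subset _ _

lemma chain'_mono_mem {α : Type*} {R S : α → α → Prop} :
    ∀ {l : List α}, (∀ a ∈ l, ∀ b ∈ l, R a b → S a b) → l.Chain' R → l.Chain' S := by
  intro l
  induction l with
  | nil => intro _ _; exact List.isChain_nil
  | cons a l ih =>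
      intro h hc
      cases l with
      | nil => exact List.isChain_singleton a
      | cons c l' =>
          simp only [List.Chain', List.isChain_cons_cons] at hc ⊢
          refine ⟨h a (by simp) c (by simp) hc.1, ih ?_ hc.2⟩
          intro u hu v hv
          exact h u (List.mem_cons_of_mem _ hu) v (List.mem_cons_of_mem _ hv)

end Aux

/-- obstruction-trees are only influenced by adjacent variables:
if `x ∉ var(T)` and no clause of `T` contains `x` with polarity `b`, then `T`
remains an `(i,d,k)`-obstruction-tree of `φ[x := b]`. -/
theorem obsTree_local (i d k : ℕ) (φ : CNF) (hφ : φ.InC d)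
    (T : ObsTree) (hT : IsObsTree φ d k i T) (x : Var) (b : Bool)
    (hx : x ∈ φ.vars)
    (hvar : Sum.inl x ∉ T.elts φ)
    (hcla : ∀ c ∈ T.claSet φ, x ∉ (if b then φ.pos c else φ.neg c)) :
    IsObsTree (φ.assign x b) d k i T := by
  revert hvar hcla
  induction hT with
  | base c hc hcard =>
      intro hvar hcla
      have hxc : x ∉ φ.cvars c := fun h => hvar (by simp [ObsTree.elts, h])
      have hmem : c ∈ (φ.assign x b).ids :=
        mem_ids_assign.2 ⟨hc, hcla c (mem_claSet_of_mem_elts (by simp [ObsTree.elts]))⟩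
      have hcv : (φ.assign x b).cvars c = φ.cvars c := by
        rw [cvars_assign, Finset.erase_eq_self.2 hxc]
      exact IsObsTree.base c hmem (by rw [hcv, hcard])
  | node j T₁ T₂ P h₁ h₂ hdisj hchain hnodup hne hhead hlast hlen ih₁ ih₂ =>
      intro hvar hcla
      simp only [ObsTree.elts, Finset.mem_union, not_or] at hvar
      obtain ⟨⟨hv1, hv2⟩, hvP⟩ := hvar
      have hcla₁ : ∀ c ∈ T₁.claSet φ, x ∉ (if b then φ.pos c else φ.neg c) :=
        fun c hcm => hcla c (claSet_mono.1 hcm)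
      have hcla₂ : ∀ c ∈ T₂.claSet φ, x ∉ (if b then φ.pos c else φ.neg c) :=
        fun c hcm => hcla c (claSet_mono.2 hcm)
      have hadj : ∀ u ∈ P, ∀ v ∈ P, (CNF.incGraph φ).Adj u v →
          (CNF.incGraph (φ.assign x b)).Adj u v := by
        have key : ∀ y c, Sum.inl y ∈ P → Sum.inr c ∈ P →
            (c ∈ φ.ids ∧ y ∈ φ.cvars c) →
            (c ∈ (φ.assign x b).ids ∧ y ∈ (φ.assign x b).cvars c) := by
          intro y c hy hc h
          have hcm : c ∈ (ObsTree.node T₁ T₂ P).claSet φ :=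
            mem_claSet_of_mem_elts (by
              simp [ObsTree.elts, List.mem_toFinset.2 hc])
          have hyx : y ≠ x := by
            intro h'; subst h'
            exact hvP (List.mem_toFinset.2 hy)
          refine ⟨mem_ids_assign.2 ⟨h.1, hcla c hcm⟩, ?_⟩
          rw [cvars_assign]
          exact Finset.mem_erase.2 ⟨hyx, h.2⟩
        rintro (y | c) hu (z | e) hv h
        · exact h.elim
        · exact key y e hu hv h
        · exact key z c hv hu h
        · exact h.elim
      refine IsObsTree.node j T₁ T₂ P (ih₁ hv1 hcla₁) (ih₂ hv2 hcla₂)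
        (hdisj.mono (nd_assign_subset φ x b T₁ hv1) (nd_assign_subset φ x b T₂ hv2))
        (chain'_mono_mem hadj hchain) hnodup hne ?_ ?_ hlen
      · rw [elts_assign φ x b T₁ hv1]; exact hhead
      · rw [elts_assign φ x b T₂ hv2]; exact hlast
end

section
/- In the Set Cover reduction formula, the constructed CNF formula φ over variables {b₁,…,b_{k+2}, s₁,…,s_n} — with clauses β_i = (b_i) for i = 1..k+2 and σ_u = (¬b₁ ∨ … ∨ ¬b_{k+2} ∨ ⋁_{i : u ∈ S_i} s_i) for u ∈ U — has a weak recursive backdoor of depth at most k+1 to 𝒞₀ if and only if (S,U,k) is a yes-instance of Set Cover (i.e., there exist at most k sets from S = {S₁,…,S_n} whose union is U). -/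
/-- The Set Cover reduction formula: variables `b_i` are `1,…,k+2`, variables
`s_j` are `k+2+j` for `j = 1,…,n`; clause `β_i = (b_i)` has id `i` for
`i = 1,…,k+2`, and clause `σ_u = (¬b₁ ∨ … ∨ ¬b_{k+2} ∨ ⋁_{j : u ∈ S j} s_j)`
has id `k+3+u` for `u ∈ U`. -/
def scFormula (n k : ℕ) (U : Finset ℕ) (S : ℕ → Finset ℕ) : CNF where
  ids := Finset.Icc 1 (k + 2) ∪ U.image (fun u => k + 3 + u)
  pos := fun i =>
    if i ≤ k + 2 then {i}
    else ((Finset.Icc 1 n).filter fun j => i - (k + 3) ∈ S j).image fun j => k + 2 + j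
  neg := fun i => if i ≤ k + 2 then ∅ else Finset.Icc 1 (k + 2)


section SetCoverProof
open Finset

/-- The state formula: `B` = remaining b-variables/β-clauses, `T` = remaining
universe elements (σ-clauses), `E` = s-variable indices already assigned. -/
private def stF (n k : ℕ) (S : ℕ → Finset ℕ) (B T E : Finset ℕ) : CNF where
  ids := B ∪ T.image (fun u => k + 3 + u)
  pos := fun i =>
    if i ≤ k + 2 then (if i ∈ insert 0 B then {i} else ∅)
    else (((Finset.Icc 1 n).filter fun j => i - (k + 3) ∈ S j) \ E).image fun j => k + 2 + j
  neg := fun i => if i ≤ k + 2 then ∅ else B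

private lemma cnf_eq {φ ψ : CNF} (h1 : φ.ids = ψ.ids) (h2 : φ.pos = ψ.pos)
    (h3 : φ.neg = ψ.neg) : φ = ψ := by
  cases φ; cases ψ; simp_all

private lemma wrbd_dead {φ : CNF} {m : ℕ} (h : WrbdLE φ m) :
    ∀ i ∈ φ.ids, φ.cvars i ≠ ∅ := by
  induction h with
  | base φ k hv hs =>
    intro i hi hc
    obtain ⟨τ, hτ⟩ := hs
    rcases hτ i hi with ⟨x, hx, _⟩ | ⟨x, hx, _⟩ <;>
    · have hx' : x ∈ φ.cvars i := by
        simp [CNF.cvars, hx]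
      rw [hc] at hx'; simp at hx'
  | assign φ k x b hx h ih =>
    intro i hi hc
    have hpn : φ.pos i = ∅ ∧ φ.neg i = ∅ := by
      rw [CNF.cvars, Finset.union_eq_empty] at hc; exact hc
    refine ih i ?_ ?_
    · exact Finset.mem_filter.mpr ⟨hi, by cases b <;> simp [hpn.1, hpn.2]⟩
    · simp [CNF.assign, CNF.cvars, hpn.1, hpn.2]
  | split φ k h ih =>
    classical
    intro i hi hc
    refine ih (φ.componentOf i) ?_ i ?_ hc
    · rw [CNF.components]; exact Finset.mem_image_of_mem _ hi
    · rw [CNF.componentOf]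
      exact Finset.mem_filter.mpr ⟨hi, SimpleGraph.Reachable.refl _⟩

private lemma wrbd_zero_vars {φ : CNF} {m : ℕ} (h : WrbdLE φ m) (hm : m = 0) :
    φ.vars = ∅ := by
  induction h with
  | base φ k hv hs => exact hv
  | assign φ k x b hx h ih => omega
  | split φ k h ih =>
    subst hm
    rw [Finset.eq_empty_iff_forall_notMem]
    intro x hx
    obtain ⟨i, hi, hxi⟩ := Finset.mem_biUnion.mp hx
    classical
    have hmem : φ.componentOf i ∈ φ.components := by
      rw [CNF.components]; exact Finset.mem_image_of_mem _ hi
    have hv := ih _ hmem rfl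
    rw [Finset.eq_empty_iff_forall_notMem] at hv
    refine hv x (Finset.mem_biUnion.mpr ⟨i, ?_, hxi⟩)
    rw [CNF.componentOf]
    exact Finset.mem_filter.mpr ⟨hi, SimpleGraph.Reachable.refl _⟩

private lemma wrbd_mono {φ : CNF} {m : ℕ} (h : WrbdLE φ m) :
    ∀ {m'}, m ≤ m' → WrbdLE φ m' := by
  induction h with
  | base φ k hv hs => intro m' _; exact .base φ m' hv hs
  | assign φ k x b hx h ih =>
    intro m' hm'
    obtain ⟨m'', rfl⟩ : ∃ m'', m' = m'' + 1 := ⟨m' - 1, by omega⟩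
    exact .assign φ m'' x b hx (ih (by omega))
  | split φ k h ih =>
    intro m' hm'
    exact .split φ m' (fun ψ hψ => ih ψ hψ hm')


private lemma scFormula_eq (n k : ℕ) (U : Finset ℕ) (S : ℕ → Finset ℕ) :
    scFormula n k U S = stF n k S (Finset.Icc 1 (k + 2)) U ∅ := by
  apply cnf_eq
  · rfl
  · funext i
    by_cases h : i ≤ k + 2
    · simp only [scFormula, stF, if_pos h]
      rw [if_pos]
      simp only [Finset.mem_insert, Finset.mem_Icc]
      omega
    · simp [scFormula, stF, h]
  · rfl

private lemma stF_vars {n k : ℕ} {S : ℕ → Finset ℕ} {B T E : Finset ℕ}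
    (hB : B ⊆ Finset.Icc 1 (k + 2)) {x : ℕ} :
    x ∈ (stF n k S B T E).vars ↔
      x ∈ B ∨ ∃ j, j ∈ Finset.Icc 1 n ∧ j ∉ E ∧ (∃ u ∈ T, u ∈ S j) ∧ x = k + 2 + j := by
  constructor
  · intro hx
    obtain ⟨i, hi, hxi⟩ := Finset.mem_biUnion.mp hx
    rcases Finset.mem_union.mp hi with hiB | hiT
    · have hik : i ≤ k + 2 := (Finset.mem_Icc.mp (hB hiB)).2
      have hxeq : x = i := by
        simp only [CNF.cvars, stF, if_pos hik, Finset.mem_union] at hxi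
        rcases hxi with h1 | h1
        · rw [if_pos (Finset.mem_insert_of_mem hiB)] at h1; simpa using h1
        · simp at h1
      exact Or.inl (hxeq ▸ hiB)
    · obtain ⟨u, hu, rfl⟩ := Finset.mem_image.mp hiT
      have hik : ¬ (k + 3 + u ≤ k + 2) := by omega
      simp only [CNF.cvars, stF, if_neg hik, Finset.mem_union] at hxi
      rcases hxi with h1 | h1
      · obtain ⟨j, hj, rfl⟩ := Finset.mem_image.mp h1
        obtain ⟨hj1, hj2⟩ := Finset.mem_sdiff.mp hj
        obtain ⟨hj3, hj4⟩ := Finset.mem_filter.mp hj1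
        have he : k + 3 + u - (k + 3) = u := by omega
        rw [he] at hj4
        exact Or.inr ⟨j, hj3, hj2, ⟨u, hu, hj4⟩, rfl⟩
      · exact Or.inl h1
  · intro hx
    rcases hx with hxB | ⟨j, hj, hjE, ⟨u, hu, huj⟩, rfl⟩
    · refine Finset.mem_biUnion.mpr ⟨x, Finset.mem_union_left _ hxB, ?_⟩
      have hik : x ≤ k + 2 := (Finset.mem_Icc.mp (hB hxB)).2
      simp only [CNF.cvars, stF, if_pos hik, Finset.mem_union]
      left
      rw [if_pos (Finset.mem_insert_of_mem hxB)]
      simp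
    · refine Finset.mem_biUnion.mpr
        ⟨k + 3 + u, Finset.mem_union_right _ (Finset.mem_image_of_mem _ hu), ?_⟩
      have hik : ¬ (k + 3 + u ≤ k + 2) := by omega
      simp only [CNF.cvars, stF, if_neg hik, Finset.mem_union]
      left
      refine Finset.mem_image.mpr
        ⟨j, Finset.mem_sdiff.mpr ⟨Finset.mem_filter.mpr ⟨hj, ?_⟩, hjE⟩, rfl⟩
      have he : k + 3 + u - (k + 3) = u := by omega
      rw [he]; exact huj

private lemma stF_assign_b_true {n k : ℕ} {S : ℕ → Finset ℕ} {B T E : Finset ℕ}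
    (hB : B ⊆ Finset.Icc 1 (k + 2)) {b : ℕ} (hb : b ∈ B) :
    (stF n k S B T E).assign b true = stF n k S (B.erase b) T E := by
  have hb2 : 1 ≤ b ∧ b ≤ k + 2 := Finset.mem_Icc.mp (hB hb)
  apply cnf_eq
  · ext i
    simp only [CNF.assign, stF, Finset.mem_filter, Finset.mem_union, Finset.mem_erase,
      Finset.mem_image, if_true]
    constructor
    · rintro ⟨hiB | ⟨u, hu, rfl⟩, hnot⟩
      · left
        refine ⟨fun he => hnot ?_, hiB⟩
        subst he
        rw [if_pos hb2.2, if_pos (Finset.mem_insert_of_mem hb)]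
        simp
      · exact Or.inr ⟨u, hu, rfl⟩
    · rintro (⟨hne, hiB⟩ | ⟨u, hu, rfl⟩)
      · refine ⟨Or.inl hiB, ?_⟩
        have hik : i ≤ k + 2 := (Finset.mem_Icc.mp (hB hiB)).2
        rw [if_pos hik]
        split
        · simp [Ne.symm hne]
        · simp
      · refine ⟨Or.inr ⟨u, hu, rfl⟩, ?_⟩
        rw [if_neg (by omega : ¬ (k + 3 + u ≤ k + 2))]
        intro hcon
        obtain ⟨j, hj, hj2⟩ := Finset.mem_image.mp hcon
        have := (Finset.mem_Icc.mp (Finset.mem_filter.mp (Finset.mem_sdiff.mp hj).1).1).1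
        simp only [Var] at *
        omega
  · funext i
    simp only [CNF.assign, stF]
    by_cases hik : i ≤ k + 2
    · rw [if_pos hik, if_pos hik]
      by_cases hib : i = b
      · subst hib
        rw [if_pos (Finset.mem_insert_of_mem hb), if_neg]
        · simp
        · simp only [Finset.mem_insert, Finset.mem_erase]
          push_neg
          exact ⟨by omega, fun h => absurd rfl h⟩
      · have hiff : (i ∈ insert 0 B) ↔ (i ∈ insert 0 (B.erase b)) := by
          simp [Finset.mem_insert, Finset.mem_erase, hib]
        by_cases him : i ∈ insert 0 B
        · rw [if_pos him, if_pos (hiff.mp him),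
            Finset.erase_eq_of_notMem (by simp [Ne.symm hib])]
        · rw [if_neg him, if_neg (fun hc => him (hiff.mpr hc))]
          exact Finset.erase_empty _
    · rw [if_neg hik, if_neg hik]
      apply Finset.erase_eq_of_notMem
      intro hc
      obtain ⟨j, hj, hj2⟩ := Finset.mem_image.mp hc
      have := (Finset.mem_Icc.mp (Finset.mem_filter.mp (Finset.mem_sdiff.mp hj).1).1).1
      simp only [Var] at *
      omega
  · funext i
    simp only [CNF.assign, stF]
    by_cases hik : i ≤ k + 2
    · rw [if_pos hik, if_pos hik]; exact Finset.erase_empty _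
    · rw [if_neg hik, if_neg hik]

private lemma stF_assign_b_false {n k : ℕ} {S : ℕ → Finset ℕ} {B T E : Finset ℕ}
    (hB : B ⊆ Finset.Icc 1 (k + 2)) {b : ℕ} (hb : b ∈ B) :
    b ∈ ((stF n k S B T E).assign b false).ids ∧
      ((stF n k S B T E).assign b false).cvars b = ∅ := by
  have hb2 : 1 ≤ b ∧ b ≤ k + 2 := Finset.mem_Icc.mp (hB hb)
  constructor
  · refine Finset.mem_filter.mpr ⟨Finset.mem_union_left _ hb, ?_⟩
    simp only [stF, if_pos hb2.2]
    simp
  · simp only [CNF.assign, CNF.cvars, stF, if_pos hb2.2,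
      if_pos (Finset.mem_insert_of_mem hb)]
    simp

private lemma stF_assign_s_true {n k : ℕ} {S : ℕ → Finset ℕ} {B T E : Finset ℕ}
    (hB : B ⊆ Finset.Icc 1 (k + 2)) {j : ℕ} (hj : j ∈ Finset.Icc 1 n) (hjE : j ∉ E) :
    (stF n k S B T E).assign (k + 2 + j) true = stF n k S B (T \ S j) (insert j E) := by
  have hj1 : 1 ≤ j ∧ j ≤ n := Finset.mem_Icc.mp hj
  apply cnf_eq
  · ext i
    simp only [CNF.assign, stF, Finset.mem_filter, Finset.mem_union, Finset.mem_image, if_true]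
    constructor
    · rintro ⟨hiB | ⟨u, hu, rfl⟩, hnot⟩
      · exact Or.inl hiB
      · right
        refine ⟨u, Finset.mem_sdiff.mpr ⟨hu, fun huS => hnot ?_⟩, rfl⟩
        rw [if_neg (by omega : ¬ (k + 3 + u ≤ k + 2))]
        refine Finset.mem_image.mpr
          ⟨j, Finset.mem_sdiff.mpr ⟨Finset.mem_filter.mpr ⟨hj, ?_⟩, hjE⟩, rfl⟩
        have he : k + 3 + u - (k + 3) = u := by omega
        rw [he]; exact huS
    · rintro (hiB | ⟨u, hu, rfl⟩)
      · refine ⟨Or.inl hiB, ?_⟩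
        have hik : i ≤ k + 2 := (Finset.mem_Icc.mp (hB hiB)).2
        rw [if_pos hik]
        split
        · simp only [Finset.mem_singleton, Var] at *; omega
        · simp
      · obtain ⟨huT, huS⟩ := Finset.mem_sdiff.mp hu
        refine ⟨Or.inr ⟨u, huT, rfl⟩, ?_⟩
        rw [if_neg (by omega : ¬ (k + 3 + u ≤ k + 2))]
        intro hcon
        obtain ⟨j', hj', hj'2⟩ := Finset.mem_image.mp hcon
        obtain ⟨hj'3, hj'4⟩ := Finset.mem_sdiff.mp hj'
        obtain ⟨hj'5, hj'6⟩ := Finset.mem_filter.mp hj'3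
        have : j' = j := by simp only [Var] at *; omega
        subst this
        have he : k + 3 + u - (k + 3) = u := by omega
        rw [he] at hj'6
        exact huS hj'6
  · funext i
    simp only [CNF.assign, stF]
    by_cases hik : i ≤ k + 2
    · rw [if_pos hik, if_pos hik]
      split
      · apply Finset.erase_eq_of_notMem
        simp only [Finset.mem_singleton, Var] at *; omega
      · exact Finset.erase_empty _
    · rw [if_neg hik, if_neg hik]
      ext a
      simp only [Finset.mem_erase, Finset.mem_image, Finset.mem_sdiff, Finset.mem_filter,
        Finset.mem_insert, Finset.mem_Icc]
      constructor
      · rintro ⟨hane, j', ⟨⟨hj'1, hj'2⟩, hj'3⟩, rfl⟩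
        refine ⟨j', ⟨⟨hj'1, hj'2⟩, ?_⟩, rfl⟩
        push_neg
        refine ⟨?_, hj'3⟩
        simp only [Var] at *
        omega
      · rintro ⟨j', ⟨⟨hj'1, hj'2⟩, hj'3⟩, rfl⟩
        push_neg at hj'3
        refine ⟨?_, j', ⟨⟨hj'1, hj'2⟩, hj'3.2⟩, rfl⟩
        simp only [Var] at *
        omega
  · funext i
    simp only [CNF.assign, stF]
    by_cases hik : i ≤ k + 2
    · rw [if_pos hik]; exact Finset.erase_empty _
    · rw [if_neg hik]
      apply Finset.erase_eq_of_notMem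
      intro hc
      have := (Finset.mem_Icc.mp (hB hc)).2
      simp only [Var] at *
      omega

private lemma stF_assign_s_false {n k : ℕ} {S : ℕ → Finset ℕ} {B T E : Finset ℕ}
    (hB : B ⊆ Finset.Icc 1 (k + 2)) {j : ℕ} (hj1 : 1 ≤ j) :
    (stF n k S B T E).assign (k + 2 + j) false = stF n k S B T (insert j E) := by
  apply cnf_eq
  · ext i
    simp only [CNF.assign, stF, Finset.mem_filter]
    refine ⟨fun h => (Finset.mem_filter.mp h).1, fun h => Finset.mem_filter.mpr ⟨h, ?_⟩⟩
    show k + 2 + j ∉ (if i ≤ k + 2 then (∅ : Finset Var) else B)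
    by_cases hik : i ≤ k + 2
    · rw [if_pos hik]; simp
    · rw [if_neg hik]
      intro hc
      have := (Finset.mem_Icc.mp (hB hc)).2
      simp only [Var] at *
      omega
  · funext i
    simp only [CNF.assign, stF]
    by_cases hik : i ≤ k + 2
    · rw [if_pos hik, if_pos hik]
      split
      · apply Finset.erase_eq_of_notMem
        simp only [Finset.mem_singleton, Var] at *; omega
      · exact Finset.erase_empty _
    · rw [if_neg hik, if_neg hik]
      ext a
      simp only [Finset.mem_erase, Finset.mem_image, Finset.mem_sdiff, Finset.mem_filter,
        Finset.mem_insert, Finset.mem_Icc]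
      constructor
      · rintro ⟨hane, j', ⟨⟨hj'1, hj'2⟩, hj'3⟩, rfl⟩
        refine ⟨j', ⟨⟨hj'1, hj'2⟩, ?_⟩, rfl⟩
        push_neg
        refine ⟨?_, hj'3⟩
        simp only [Var] at *
        omega
      · rintro ⟨j', ⟨⟨hj'1, hj'2⟩, hj'3⟩, rfl⟩
        push_neg at hj'3
        refine ⟨?_, j', ⟨⟨hj'1, hj'2⟩, hj'3.2⟩, rfl⟩
        simp only [Var] at *
        omega
  · funext i
    simp only [CNF.assign, stF]
    by_cases hik : i ≤ k + 2
    · rw [if_pos hik]; exact Finset.erase_empty _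
    · rw [if_neg hik]
      apply Finset.erase_eq_of_notMem
      intro hc
      have := (Finset.mem_Icc.mp (hB hc)).2
      simp only [Var] at *
      omega


private lemma stF_cvars_b {n k : ℕ} {S : ℕ → Finset ℕ} {B T E : Finset ℕ}
    (hB : B ⊆ Finset.Icc 1 (k + 2)) {b : ℕ} (hb : b ∈ B) :
    (stF n k S B T E).cvars b = {b} := by
  have h2 := Finset.mem_Icc.mp (hB hb)
  simp only [CNF.cvars, stF, if_pos h2.2, if_pos (Finset.mem_insert_of_mem hb)]
  simp

private lemma stF_adj_sigma_b {n k : ℕ} {S : ℕ → Finset ℕ} {B T E : Finset ℕ}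
    {u b : ℕ} (hu : u ∈ T) (hb : b ∈ B) :
    (CNF.incGraph (stF n k S B T E)).Adj (Sum.inr (k + 3 + u)) (Sum.inl b) := by
  refine ⟨Finset.mem_union_right _ (Finset.mem_image_of_mem _ hu), ?_⟩
  simp only [CNF.cvars, stF, if_neg (by omega : ¬ (k + 3 + u ≤ k + 2)), Finset.mem_union]
  exact Or.inr hb

private lemma stF_adj_b_beta {n k : ℕ} {S : ℕ → Finset ℕ} {B T E : Finset ℕ}
    (hB : B ⊆ Finset.Icc 1 (k + 2)) {b : ℕ} (hb : b ∈ B) :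
    (CNF.incGraph (stF n k S B T E)).Adj (Sum.inl b) (Sum.inr b) := by
  refine ⟨Finset.mem_union_left _ hb, ?_⟩
  rw [stF_cvars_b hB hb]
  simp

private lemma stF_self_component {n k : ℕ} {S : ℕ → Finset ℕ} {B T E : Finset ℕ}
    (hB : B ⊆ Finset.Icc 1 (k + 2)) (hBne : B.Nonempty) (hTne : T.Nonempty) :
    (stF n k S B T E) ∈ (stF n k S B T E).components := by
  classical
  obtain ⟨u0, hu0⟩ := hTne
  obtain ⟨b0, hb0⟩ := hBne
  set φ := stF n k S B T E with hφ
  have hid0 : k + 3 + u0 ∈ φ.ids :=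
    Finset.mem_union_right _ (Finset.mem_image_of_mem _ hu0)
  have hreach : ∀ i ∈ φ.ids,
      (CNF.incGraph φ).Reachable (Sum.inr (k + 3 + u0)) (Sum.inr i) := by
    intro i hi
    rcases Finset.mem_union.mp hi with hiB | hiT
    · exact ((stF_adj_sigma_b hu0 hiB).reachable).trans
        ((stF_adj_b_beta hB hiB).reachable)
    · obtain ⟨u, hu, rfl⟩ := Finset.mem_image.mp hiT
      exact ((stF_adj_sigma_b hu0 hb0).reachable).trans
        ((stF_adj_sigma_b hu hb0).symm.reachable)
  have hcomp : φ.componentOf (k + 3 + u0) = φ := by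
    apply cnf_eq
    · rw [CNF.componentOf]
      exact Finset.filter_eq_self.mpr hreach
    · rw [CNF.componentOf]
    · rw [CNF.componentOf]
  rw [CNF.components]
  exact Finset.mem_image.mpr ⟨k + 3 + u0, hid0, hcomp⟩

private lemma stF_T_empty_wrbd {n k : ℕ} {S : ℕ → Finset ℕ} {B E : Finset ℕ}
    (hB : B ⊆ Finset.Icc 1 (k + 2)) (m : ℕ) :
    WrbdLE (stF n k S B ∅ E) (m + 1) := by
  classical
  set φ := stF n k S B ∅ E with hφ
  have hids : φ.ids = B := by
    simp [hφ, stF]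
  refine WrbdLE.split φ (m + 1) ?_
  intro ψ hψ
  rw [CNF.components] at hψ
  obtain ⟨i, hi, rfl⟩ := Finset.mem_image.mp hψ
  have hiB : i ∈ B := hids ▸ hi
  have hik := Finset.mem_Icc.mp (hB hiB)
  -- every vertex reachable from `Sum.inr i` is `Sum.inr i` or `Sum.inl i`
  have hwalk : ∀ (u v : Var ⊕ ℕ), (CNF.incGraph φ).Walk u v →
      (u = Sum.inr i ∨ u = Sum.inl i) → (v = Sum.inr i ∨ v = Sum.inl i) := by
    intro u v p
    induction p with
    | nil => exact id
    | @cons a w c hadj p ih =>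
      intro hu
      apply ih
      rcases hu with rfl | rfl
      · cases w with
        | inl x =>
          obtain ⟨h1, h2⟩ : i ∈ φ.ids ∧ x ∈ φ.cvars i := hadj
          rw [stF_cvars_b hB hiB] at h2
          right
          rw [Finset.mem_singleton.mp h2]
        | inr jj => exact absurd hadj (by simp [CNF.incGraph])
      · cases w with
        | inl x => exact absurd hadj (by simp [CNF.incGraph])
        | inr jj =>
          obtain ⟨h1, h2⟩ : jj ∈ φ.ids ∧ i ∈ φ.cvars jj := hadj
          have hjjB : jj ∈ B := hids ▸ h1
          rw [stF_cvars_b hB hjjB] at h2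
          left
          rw [Finset.mem_singleton.mp h2]
  have hcids : (φ.componentOf i).ids = {i} := by
    rw [CNF.componentOf]
    ext j
    simp only [Finset.mem_filter, Finset.mem_singleton]
    constructor
    · rintro ⟨hj, hr⟩
      obtain ⟨p⟩ := hr
      rcases hwalk _ _ p (Or.inl rfl) with h | h
      · exact Sum.inr.inj h
      · simp at h
    · rintro rfl
      exact ⟨hi, SimpleGraph.Reachable.refl _⟩
  have hcpos : (φ.componentOf i).pos = φ.pos := by rw [CNF.componentOf]
  have hcneg : (φ.componentOf i).neg = φ.neg := by rw [CNF.componentOf]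
  refine WrbdLE.assign _ m i true ?_ ?_
  · rw [CNF.vars, hcids]
    refine Finset.mem_biUnion.mpr ⟨i, Finset.mem_singleton_self i, ?_⟩
    have : (φ.componentOf i).cvars i = φ.cvars i := by
      rw [CNF.cvars, CNF.cvars, hcpos, hcneg]
    rw [this, stF_cvars_b hB hiB]
    simp
  · have hpos : i ∈ (φ.componentOf i).pos i := by
      rw [hcpos]
      simp only [hφ, stF, if_pos hik.2, if_pos (Finset.mem_insert_of_mem hiB)]
      simp
    have hids2 : ((φ.componentOf i).assign i true).ids = ∅ := by
      simp only [CNF.assign, hcids]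
      rw [Finset.filter_singleton, if_neg (by simpa using hpos)]
    refine WrbdLE.base _ m ?_ ?_
    · rw [CNF.vars, hids2]
      simp
    · exact ⟨fun _ => true, fun j hj => by rw [hids2] at hj; simp at hj⟩


private lemma fwd_aux (n k : ℕ) (S : ℕ → Finset ℕ) (J : Finset ℕ) :
    ∀ (T E : Finset ℕ), J ⊆ Finset.Icc 1 n → Disjoint J E → T ⊆ J.biUnion S →
      WrbdLE (stF n k S (Finset.Icc 1 (k + 2)) T E) (J.card + 1) := by
  induction J using Finset.strongInductionOn with
  | _ J ih =>
    intro T E hJ hJE hTJ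
    rcases T.eq_empty_or_nonempty with rfl | hT
    · exact stF_T_empty_wrbd Finset.Subset.rfl _
    · obtain ⟨u0, hu0⟩ := hT
      obtain ⟨j0, hj0J, hj0S⟩ := Finset.mem_biUnion.mp (hTJ hu0)
      have hj0n : j0 ∈ Finset.Icc 1 n := hJ hj0J
      have hj0E : j0 ∉ E := Finset.disjoint_left.mp hJE hj0J
      have hJcard : J.card = (J.erase j0).card + 1 :=
        (Finset.card_erase_add_one hj0J).symm
      rw [hJcard]
      refine WrbdLE.assign _ _ (k + 2 + j0) true ?_ ?_
      · exact (stF_vars Finset.Subset.rfl).mpr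
          (Or.inr ⟨j0, hj0n, hj0E, ⟨u0, hu0, hj0S⟩, rfl⟩)
      · rw [stF_assign_s_true Finset.Subset.rfl hj0n hj0E]
        refine ih (J.erase j0) (Finset.erase_ssubset hj0J) _ _
          ((Finset.erase_subset _ _).trans hJ) ?_ ?_
        · rw [Finset.disjoint_left]
          intro a ha hc
          obtain ⟨hane, haJ⟩ := Finset.mem_erase.mp ha
          rcases Finset.mem_insert.mp hc with rfl | haE
          · exact hane rfl
          · exact Finset.disjoint_left.mp hJE haJ haE
        · intro u hu
          obtain ⟨huT, huS⟩ := Finset.mem_sdiff.mp hu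
          obtain ⟨j, hjJ, hjS⟩ := Finset.mem_biUnion.mp (hTJ huT)
          refine Finset.mem_biUnion.mpr ⟨j, Finset.mem_erase.mpr ⟨?_, hjJ⟩, hjS⟩
          rintro rfl
          exact huS hjS

private lemma bwd_aux (n k : ℕ) (S : ℕ → Finset ℕ) :
    ∀ {φ : CNF} {m : ℕ}, WrbdLE φ m → ∀ (B T E : Finset ℕ),
      B ⊆ Finset.Icc 1 (k + 2) → T.Nonempty → m < B.card → φ = stF n k S B T E →
      ∃ J, J ⊆ Finset.Icc 1 n ∧ Disjoint J E ∧ T ⊆ J.biUnion S ∧ J.card < m := by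
  intro φ m h
  induction h with
  | base φ' m' hv hs =>
    intro B T E hB hT hm hφ
    exfalso
    obtain ⟨b, hb⟩ := Finset.card_pos.mp (by omega : 0 < B.card)
    have hbv : b ∈ φ'.vars := hφ ▸ (stF_vars hB).mpr (Or.inl hb)
    rw [hv] at hbv
    simp at hbv
  | assign φ' m' x bo hx h ih =>
    intro B T E hB hT hm hφ
    subst hφ
    rcases (stF_vars hB).mp hx with hxB | ⟨j, hjn, hjE, ⟨u, huT, huS⟩, rfl⟩
    · cases bo with
      | false =>
        exfalso
        obtain ⟨h1, h2⟩ := stF_assign_b_false hB hxB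
        exact wrbd_dead h _ h1 h2
      | true =>
        rw [stF_assign_b_true hB hxB] at h ih
        obtain ⟨J, h1, h2, h3, h4⟩ := ih (B.erase x) T E
          ((Finset.erase_subset _ _).trans hB) hT
          (by rw [Finset.card_erase_of_mem hxB]; omega) rfl
        exact ⟨J, h1, h2, h3, by omega⟩
    · cases bo with
      | false =>
        rw [stF_assign_s_false hB (Finset.mem_Icc.mp hjn).1] at h ih
        obtain ⟨J, h1, h2, h3, h4⟩ := ih B T (insert j E) hB hT (by omega) rfl
        exact ⟨J, h1, h2.mono_right (Finset.subset_insert j E), h3, by omega⟩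
      | true =>
        rw [stF_assign_s_true hB hjn hjE] at h ih
        rcases (T \ S j).eq_empty_or_nonempty with he | hne
        · have hm' : m' ≠ 0 := by
            intro h0
            subst h0
            have hv := wrbd_zero_vars h rfl
            obtain ⟨b, hb⟩ := Finset.card_pos.mp (by omega : 0 < B.card)
            have hbv := (stF_vars (n := n) (S := S) (T := T \ S j)
              (E := insert j E) hB).mpr (Or.inl hb)
            rw [hv] at hbv
            simp at hbv
          refine ⟨{j}, Finset.singleton_subset_iff.mpr hjn, ?_, ?_, ?_⟩
          · simp [Finset.disjoint_left, hjE]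
          · intro u' hu'
            refine Finset.mem_biUnion.mpr ⟨j, Finset.mem_singleton_self j, ?_⟩
            have := Finset.sdiff_eq_empty_iff_subset.mp he
            exact this hu'
          · simp
            omega
        · obtain ⟨J, h1, h2, h3, h4⟩ := ih B (T \ S j) (insert j E) hB hne (by omega) rfl
          refine ⟨insert j J, Finset.insert_subset hjn h1, ?_, ?_, ?_⟩
          · rw [Finset.disjoint_left]
            intro a ha hc
            rcases Finset.mem_insert.mp ha with rfl | haJ
            · exact hjE hc
            · exact Finset.disjoint_left.mp h2 haJ (Finset.mem_insert_of_mem hc)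
          · intro u' hu'
            by_cases h5 : u' ∈ S j
            · exact Finset.mem_biUnion.mpr ⟨j, Finset.mem_insert_self j J, h5⟩
            · obtain ⟨j', hj', hj'S⟩ :=
                Finset.mem_biUnion.mp (h3 (Finset.mem_sdiff.mpr ⟨hu', h5⟩))
              exact Finset.mem_biUnion.mpr ⟨j', Finset.mem_insert_of_mem hj', hj'S⟩
          · have := Finset.card_insert_le j J
            omega
  | split φ' m' h ih =>
    intro B T E hB hT hm hφ
    subst hφ
    have hBne : B.Nonempty := Finset.card_pos.mp (by omega)
    exact ih _ (stF_self_component hB hBne hT) B T E hB hT hm rfl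

end SetCoverProof




/-- the Set Cover reduction formula has a weak recursive
backdoor of depth at most `k+1` to `𝒞₀` iff `(S,U,k)` is a yes-instance of
Set Cover. -/
theorem setCover_reduction (n k : ℕ) (U : Finset ℕ) (S : ℕ → Finset ℕ)
    (hS : ∀ j ∈ Finset.Icc 1 n, S j ⊆ U) :
    WrbdLE (scFormula n k U S) (k + 1) ↔
      ∃ J ⊆ Finset.Icc 1 n, J.card ≤ k ∧ U ⊆ J.biUnion S := by
  constructor
  · intro h
    rcases U.eq_empty_or_nonempty with rfl | hU
    · exact ⟨∅, by simp⟩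
    · rw [scFormula_eq] at h
      obtain ⟨J, h1, _, h3, h4⟩ := bwd_aux n k S h (Finset.Icc 1 (k + 2)) U ∅
        Finset.Subset.rfl hU (by rw [Nat.card_Icc]; omega) rfl
      exact ⟨J, h1, by omega, h3⟩
  · rintro ⟨J, hJ, hcard, hcover⟩
    have h := fwd_aux n k S J U ∅ hJ (Finset.disjoint_empty_right J) hcover
    rw [scFormula_eq]
    exact wrbd_mono h (by omega)
end
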